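/- arXiv:2102.03730 — 4 statements merged into one kernel-verified Lean document; each statement's English description precedes it below -/
import Mathlib

section
/- Let C be a non-zero graded submodule of M. Then C is a graded strongly classical 2-absorbing second submodule of M if and only if for every graded submodule N of M with C ⊄ N, the ideal (N :_R C) = {r ∈ R : r·C ⊆ N} is a graded 2-absorbing ideal of R. -/
open Pointwise

section GradedDefs

variable {G : Type*} [Group G] [DecidableEq G] {R : Type*} [CommRing R]
  {M : Type*} [AddCommGroup M] [Module R M]

/-- `R` is a `G`-graded commutative ring via the additive subgroups `𝒜 α`:
`R_α R_β ⊆ R_{αβ}` and `R = ⊕_{α ∈ G} R_α`. -/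
structure IsRingGrading (𝒜 : G → AddSubgroup R) : Prop where
  one_mem : (1 : R) ∈ 𝒜 1
  mul_mem : ∀ ⦃α β : G⦄ ⦃r s : R⦄, r ∈ 𝒜 α → s ∈ 𝒜 β → r * s ∈ 𝒜 (α * β)
  isInternal : DirectSum.IsInternal 𝒜

/-- `M` is a graded module over the `G`-graded ring `R`:
`R_α M_β ⊆ M_{αβ}` and `M = ⊕_{α ∈ G} M_α`. -/
structure IsModuleGrading (𝒜 : G → AddSubgroup R) (ℳ : G → AddSubgroup M) : Prop where
  smul_mem : ∀ ⦃α β : G⦄ ⦃r : R⦄ ⦃m : M⦄, r ∈ 𝒜 α → m ∈ ℳ β → r • m ∈ ℳ (α * β)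
  isInternal : DirectSum.IsInternal ℳ

/-- A submodule `N` of `M` is a graded submodule iff `N = ⊕_{α ∈ G} (N ∩ M_α)`,
equivalently, every element of `N` is a sum of homogeneous elements of `N`. -/
def IsGradedSubmodule (ℳ : G → AddSubgroup M) (N : Submodule R M) : Prop :=
  ∀ n ∈ N, n ∈ Submodule.span R {m : M | m ∈ N ∧ ∃ α, m ∈ ℳ α}

/-- An ideal `I` of `R` is a graded ideal iff `I = ⊕_{α ∈ G} (I ∩ R_α)`. -/
def IsGradedIdeal (𝒜 : G → AddSubgroup R) (I : Ideal R) : Prop :=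
  ∀ r ∈ I, r ∈ Ideal.span {s : R | s ∈ I ∧ ∃ α, s ∈ 𝒜 α}

/-- A proper graded submodule `C` of `M` is completely graded irreducible if whenever
`C = ⋂_{λ ∈ Δ} C_λ` for a family of graded submodules `C_λ`, then `C = C_β` for some `β`. -/
def CompletelyGradedIrreducible (ℳ : G → AddSubgroup M) (C : Submodule R M) : Prop :=
  IsGradedSubmodule ℳ C ∧ C ≠ ⊤ ∧
    ∀ S : Set (Submodule R M), (∀ D ∈ S, IsGradedSubmodule ℳ D) → C = sInf S → C ∈ S

/-- A non-zero graded submodule `C` of `M` is a graded classical 2-absorbing second submodule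
if whenever `r, s, t ∈ h(R)`, `U` is a completely graded irreducible submodule of `M` and
`r·s·t·C ⊆ U`, then `r·s·C ⊆ U` or `s·t·C ⊆ U` or `r·t·C ⊆ U`. -/
def IsGrClassical2AbsorbingSecond (𝒜 : G → AddSubgroup R) (ℳ : G → AddSubgroup M)
    (C : Submodule R M) : Prop :=
  C ≠ ⊥ ∧ IsGradedSubmodule ℳ C ∧
    ∀ r s t : R, (∃ α, r ∈ 𝒜 α) → (∃ β, s ∈ 𝒜 β) → (∃ γ, t ∈ 𝒜 γ) →
      ∀ U : Submodule R M, CompletelyGradedIrreducible ℳ U →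
        r • s • t • C ≤ U → (r • s • C ≤ U ∨ s • t • C ≤ U ∨ r • t • C ≤ U)

/-- A non-zero graded submodule `C` of `M` is a graded strongly classical 2-absorbing second
submodule if whenever `r, s, t ∈ h(R)`, `U₁, U₂, U₃` are completely graded irreducible
submodules of `M` and `r·s·t·C ⊆ U₁ ∩ U₂ ∩ U₃`, then `r·s·C ⊆ U₁ ∩ U₂ ∩ U₃` or
`s·t·C ⊆ U₁ ∩ U₂ ∩ U₃` or `r·t·C ⊆ U₁ ∩ U₂ ∩ U₃`. -/
def IsGrStronglyClassical2AbsorbingSecond (𝒜 : G → AddSubgroup R) (ℳ : G → AddSubgroup M)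
    (C : Submodule R M) : Prop :=
  C ≠ ⊥ ∧ IsGradedSubmodule ℳ C ∧
    ∀ r s t : R, (∃ α, r ∈ 𝒜 α) → (∃ β, s ∈ 𝒜 β) → (∃ γ, t ∈ 𝒜 γ) →
      ∀ U₁ U₂ U₃ : Submodule R M, CompletelyGradedIrreducible ℳ U₁ →
        CompletelyGradedIrreducible ℳ U₂ → CompletelyGradedIrreducible ℳ U₃ →
        r • s • t • C ≤ U₁ ⊓ U₂ ⊓ U₃ →
        (r • s • C ≤ U₁ ⊓ U₂ ⊓ U₃ ∨ s • t • C ≤ U₁ ⊓ U₂ ⊓ U₃ ∨ r • t • C ≤ U₁ ⊓ U₂ ⊓ U₃)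

/-- A non-zero graded submodule `S` of `M` is a graded weakly second submodule if whenever
`r, s ∈ h(R)`, `N` is a graded submodule of `M` and `r·s·S ⊆ N`, then `r·S ⊆ N` or `s·S ⊆ N`. -/
def IsGrWeaklySecond (𝒜 : G → AddSubgroup R) (ℳ : G → AddSubgroup M)
    (S : Submodule R M) : Prop :=
  S ≠ ⊥ ∧ IsGradedSubmodule ℳ S ∧
    ∀ r s : R, (∃ α, r ∈ 𝒜 α) → (∃ β, s ∈ 𝒜 β) →
      ∀ N : Submodule R M, IsGradedSubmodule ℳ N →
        r • s • S ≤ N → (r • S ≤ N ∨ s • S ≤ N)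

/-- A proper graded ideal `I` of `R` is a graded 2-absorbing ideal if whenever `r, s, t ∈ h(R)`
with `r·s·t ∈ I`, then `r·s ∈ I` or `r·t ∈ I` or `s·t ∈ I`. -/
def IsGr2AbsorbingIdeal (𝒜 : G → AddSubgroup R) (I : Ideal R) : Prop :=
  I ≠ ⊤ ∧ IsGradedIdeal 𝒜 I ∧
    ∀ r s t : R, (∃ α, r ∈ 𝒜 α) → (∃ β, s ∈ 𝒜 β) → (∃ γ, t ∈ 𝒜 γ) →
      r * s * t ∈ I → (r * s ∈ I ∨ r * t ∈ I ∨ s * t ∈ I)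

end GradedDefs

set_option linter.unusedSectionVars false
set_option maxHeartbeats 1000000

section Comp
open DirectSum

variable {G : Type*} [Group G] [DecidableEq G]
variable {M : Type*} [AddCommGroup M]

/-- The additive equivalence `M ≃+ ⨁ α, ℳ α` coming from an internal grading. -/
noncomputable def gdec (ℳ : G → AddSubgroup M) (hI : DirectSum.IsInternal ℳ) :
    M ≃+ ⨁ α, ℳ α :=
  (AddEquiv.ofBijective (DirectSum.coeAddMonoidHom ℳ) hI).symm

/-- The `α`-homogeneous component of `m`. -/
noncomputable def gcomp (ℳ : G → AddSubgroup M) (hI : DirectSum.IsInternal ℳ)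
    (α : G) (m : M) : M :=
  (gdec ℳ hI m α : M)

variable {ℳ : G → AddSubgroup M} (hI : DirectSum.IsInternal ℳ)

lemma gcomp_mem (α : G) (m : M) : gcomp ℳ hI α m ∈ ℳ α := (gdec ℳ hI m α).2

lemma gcomp_zero (α : G) : gcomp ℳ hI α 0 = 0 := by
  simp [gcomp, map_zero]

lemma gcomp_add (α : G) (m₁ m₂ : M) :
    gcomp ℳ hI α (m₁ + m₂) = gcomp ℳ hI α m₁ + gcomp ℳ hI α m₂ := by
  simp [gcomp, map_add, DirectSum.add_apply]

lemma gdec_of_mem {β : G} {m : M} (hm : m ∈ ℳ β) :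
    gdec ℳ hI m = DirectSum.of (fun α => ℳ α) β ⟨m, hm⟩ := by
  have : (AddEquiv.ofBijective (DirectSum.coeAddMonoidHom ℳ) hI)
      (DirectSum.of (fun α => ℳ α) β ⟨m, hm⟩) = m := by
    exact DirectSum.coeAddMonoidHom_of ℳ β ⟨m, hm⟩
  rw [gdec, AddEquiv.symm_apply_eq, this]

lemma gcomp_of_mem_same {β : G} {m : M} (hm : m ∈ ℳ β) : gcomp ℳ hI β m = m := by
  rw [gcomp, gdec_of_mem hI hm, DirectSum.of_eq_same]

lemma gcomp_of_mem_ne {α β : G} {m : M} (hm : m ∈ ℳ β) (h : α ≠ β) :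
    gcomp ℳ hI α m = 0 := by
  rw [gcomp, gdec_of_mem hI hm, DirectSum.of_eq_of_ne _ _ _ h,
    ZeroMemClass.coe_zero]

lemma gcomp_finset_sum {ι : Type*} (s : Finset ι) (f : ι → M) (α : G) :
    gcomp ℳ hI α (∑ i ∈ s, f i) = ∑ i ∈ s, gcomp ℳ hI α (f i) := by
  classical
  induction s using Finset.cons_induction with
  | empty => simp [gcomp_zero hI]
  | cons a s ha ih => rw [Finset.sum_cons, Finset.sum_cons, gcomp_add hI, ih]

/-- Every element is the (finite) sum of its homogeneous components. -/
lemma gsum (m : M) :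
    ∃ s : Finset G, m = ∑ α ∈ s, gcomp ℳ hI α m ∧ ∀ α ∉ s, gcomp ℳ hI α m = 0 := by
  classical
  set x := gdec ℳ hI m with hx
  refine ⟨x.support, ?_, ?_⟩
  · have h1 : ∑ i ∈ x.support, DirectSum.of (fun α => ℳ α) i (x i) = x :=
      DirectSum.sum_support_of x
    have h2 := congrArg (AddEquiv.ofBijective (DirectSum.coeAddMonoidHom ℳ) hI) h1
    rw [map_sum] at h2
    have h3 : (AddEquiv.ofBijective (DirectSum.coeAddMonoidHom ℳ) hI) x = m := by
      rw [hx, gdec]; exact (AddEquiv.ofBijective (DirectSum.coeAddMonoidHom ℳ) hI).apply_symm_apply m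
    rw [h3] at h2
    refine h2.symm.trans (Finset.sum_congr rfl fun i _ => ?_)
    have h4 : (AddEquiv.ofBijective (DirectSum.coeAddMonoidHom ℳ) hI)
        (DirectSum.of (fun α => ℳ α) i (x i)) = (x i : M) :=
      DirectSum.coeAddMonoidHom_of ℳ i (x i)
    rw [h4]; rfl
  · intro α hα
    have : x α = 0 := DFinsupp.notMem_support_iff.mp hα
    simp [gcomp, ← hx, this]

end Comp

section MyLemmas

variable {G : Type*} [Group G] [DecidableEq G] {R : Type*} [CommRing R]
  {M : Type*} [AddCommGroup M] [Module R M]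
variable {𝒜 : G → AddSubgroup R} {ℳ : G → AddSubgroup M}

lemma smul_submodule_le_iff (a : R) (C N : Submodule R M) :
    a • C ≤ N ↔ ∀ c ∈ C, a • c ∈ N := by
  constructor
  · intro h c hc
    exact h (Submodule.smul_mem_pointwise_smul c a C hc)
  · intro h m hm
    have hm' : m ∈ a • (C : Set M) := hm
    obtain ⟨c, hc, rfl⟩ := Set.mem_smul_set.mp hm'
    exact h c hc

lemma gcomp_mem_of_sum (hM : DirectSum.IsInternal ℳ) (N : Submodule R M) {ι : Type*}
    (s : Finset ι) (f : ι → M) (hf : ∀ i ∈ s, f i ∈ N ∧ ∃ β, f i ∈ ℳ β) (α : G) :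
    gcomp ℳ hM α (∑ i ∈ s, f i) ∈ N := by
  rw [gcomp_finset_sum]
  refine Submodule.sum_mem N fun i hi => ?_
  obtain ⟨hiN, β, hiβ⟩ := hf i hi
  by_cases h : α = β
  · subst h; rw [gcomp_of_mem_same hM hiβ]; exact hiN
  · rw [gcomp_of_mem_ne hM hiβ h]; exact N.zero_mem

lemma comp_mem_of_graded (h𝒜 : IsRingGrading 𝒜) (hℳ : IsModuleGrading 𝒜 ℳ)
    {N : Submodule R M} (hN : IsGradedSubmodule ℳ N) {n : M} (hn : n ∈ N) :
    ∀ α, gcomp ℳ hℳ.isInternal α n ∈ N := by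
  have h := hN n hn
  clear hn
  induction h using Submodule.span_induction with
  | mem x hx =>
      intro α
      obtain ⟨hxN, β, hxβ⟩ := hx
      by_cases hab : α = β
      · subst hab; rw [gcomp_of_mem_same _ hxβ]; exact hxN
      · rw [gcomp_of_mem_ne _ hxβ hab]; exact N.zero_mem
  | zero => intro α; rw [gcomp_zero]; exact N.zero_mem
  | add x y hx hy ihx ihy => intro α; rw [gcomp_add]; exact N.add_mem (ihx α) (ihy α)
  | smul r x hx ih =>
      intro α
      obtain ⟨s, hrs, -⟩ := gsum h𝒜.isInternal r
      obtain ⟨t, hxt, -⟩ := gsum hℳ.isInternal x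
      have hrw : r • x = ∑ γ ∈ s, ∑ δ ∈ t,
          gcomp 𝒜 h𝒜.isInternal γ r • gcomp ℳ hℳ.isInternal δ x := by
        conv_lhs => rw [hrs, hxt]
        rw [Finset.sum_smul]
        exact Finset.sum_congr rfl fun γ _ => Finset.smul_sum
      rw [hrw, gcomp_finset_sum]
      refine Submodule.sum_mem N fun γ _ => ?_
      exact gcomp_mem_of_sum hℳ.isInternal N t _
        (fun δ _ => ⟨N.smul_mem _ (ih δ),
          _, hℳ.smul_mem (gcomp_mem _ _ _) (gcomp_mem _ _ _)⟩) α

lemma graded_of_comp (hM : DirectSum.IsInternal ℳ) {N : Submodule R M}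
    (h : ∀ n ∈ N, ∀ α, gcomp ℳ hM α n ∈ N) : IsGradedSubmodule ℳ N := by
  intro n hn
  obtain ⟨s, hsum, -⟩ := gsum hM n
  rw [hsum]
  exact Submodule.sum_mem _ fun α _ =>
    Submodule.subset_span ⟨h n hn α, α, gcomp_mem hM α n⟩

lemma comp_mem_colon (h𝒜 : IsRingGrading 𝒜) (hℳ : IsModuleGrading 𝒜 ℳ)
    {N C : Submodule R M} (hN : IsGradedSubmodule ℳ N) (hC : IsGradedSubmodule ℳ C)
    {r : R} (hr : r ∈ N.colon C) (γ : G) : gcomp 𝒜 h𝒜.isInternal γ r ∈ N.colon C := by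
  rw [Submodule.mem_colon]
  intro c hc
  have h := hC c hc
  clear hc
  induction h using Submodule.span_induction with
  | mem x hx =>
      obtain ⟨hxC, β, hxβ⟩ := hx
      have hrx : r • x ∈ N := Submodule.mem_colon.mp hr x hxC
      by_cases h0 : gcomp 𝒜 h𝒜.isInternal γ r = 0
      · rw [h0, zero_smul]; exact N.zero_mem
      obtain ⟨s, hrs, hout⟩ := gsum h𝒜.isInternal r
      have hγs : γ ∈ s := by
        by_contra hγ; exact h0 (hout γ hγ)
      have key : gcomp ℳ hℳ.isInternal (γ * β) (r • x)
          = gcomp 𝒜 h𝒜.isInternal γ r • x := by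
        conv_lhs => rw [hrs, Finset.sum_smul]
        rw [gcomp_finset_sum, Finset.sum_eq_single γ]
        · exact gcomp_of_mem_same _ (hℳ.smul_mem (gcomp_mem _ _ _) hxβ)
        · intro γ' _ hne
          refine gcomp_of_mem_ne _ (hℳ.smul_mem (gcomp_mem _ _ _) hxβ) ?_
          intro hcontra
          exact hne (mul_right_cancel hcontra).symm
        · intro habs; exact absurd hγs habs
      rw [← key]
      exact comp_mem_of_graded h𝒜 hℳ hN hrx (γ * β)
  | zero => rw [smul_zero]; exact N.zero_mem
  | add x y hx hy ihx ihy => rw [smul_add]; exact N.add_mem ihx ihy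
  | smul a x hx ih => rw [smul_comm]; exact N.smul_mem a ih

lemma exists_cgi (hM : DirectSum.IsInternal ℳ) {N : Submodule R M}
    (hN : IsGradedSubmodule ℳ N) {m : M} (hm : m ∉ N) :
    ∃ U : Submodule R M, CompletelyGradedIrreducible ℳ U ∧ N ≤ U ∧ m ∉ U := by
  set S : Set (Submodule R M) := {U | IsGradedSubmodule ℳ U ∧ N ≤ U ∧ m ∉ U} with hS
  have hchain : ∀ c ⊆ S, IsChain (· ≤ ·) c → ∀ y ∈ c,
      ∃ ub ∈ S, ∀ z ∈ c, z ≤ ub := by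
    intro c hsub hc y hy
    have hne : c.Nonempty := ⟨y, hy⟩
    have hdir : DirectedOn (· ≤ ·) c := hc.directedOn
    refine ⟨sSup c, ⟨?_, ?_, ?_⟩, fun z hz => le_sSup hz⟩
    · intro n hn
      obtain ⟨D, hDc, hnD⟩ := (Submodule.mem_sSup_of_directed hne hdir).mp hn
      refine Submodule.span_mono ?_ ((hsub hDc).1 n hnD)
      rintro x ⟨hxD, hx⟩
      exact ⟨le_sSup hDc hxD, hx⟩
    · exact (hsub hy).2.1.trans (le_sSup hy)
    · intro hmem
      obtain ⟨D, hDc, hmD⟩ := (Submodule.mem_sSup_of_directed hne hdir).mp hmem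
      exact (hsub hDc).2.2 hmD
  obtain ⟨U, hNU, hUmax⟩ := zorn_le_nonempty₀ S hchain N ⟨hN, le_rfl, hm⟩
  obtain ⟨hUgr, hNU', hmU⟩ := hUmax.prop
  refine ⟨U, ⟨hUgr, ?_, ?_⟩, hNU', hmU⟩
  · intro hUtop
    exact hmU (hUtop ▸ Submodule.mem_top)
  · intro T hTgr hEq
    by_contra hUT
    have hmT : ∀ D ∈ T, m ∈ D := by
      intro D hD
      have hUD : U ≤ D := hEq ▸ sInf_le hD
      by_contra hmD
      have hDS : D ∈ S := ⟨hTgr D hD, hNU'.trans hUD, hmD⟩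
      have hDU : D ≤ U := hUmax.2 hDS hUD
      exact hUT ((le_antisymm hUD hDU) ▸ hD)
    have : m ∈ sInf T := Submodule.mem_sInf.mpr hmT
    exact hmU (hEq ▸ this)

end MyLemmas


theorem stmt13 {G : Type*} [Group G] [DecidableEq G] {R : Type*} [CommRing R]
    {M : Type*} [AddCommGroup M] [Module R M]
    (𝒜 : G → AddSubgroup R) (ℳ : G → AddSubgroup M)
    (h𝒜 : IsRingGrading 𝒜) (hℳ : IsModuleGrading 𝒜 ℳ)
    (C : Submodule R M) (hC0 : C ≠ ⊥) (hCgr : IsGradedSubmodule ℳ C) :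
    IsGrStronglyClassical2AbsorbingSecond 𝒜 ℳ C ↔
      ∀ N : Submodule R M, IsGradedSubmodule ℳ N → ¬ C ≤ N →
        IsGr2AbsorbingIdeal 𝒜 (N.colon C) := by
  constructor
  · -- ⇒
    rintro ⟨-, -, hSC⟩ N hNgr hCN
    refine ⟨?_, ?_, ?_⟩
    · -- colon proper
      intro htop
      have h1 : (1 : R) ∈ N.colon C := htop ▸ Submodule.mem_top
      refine hCN fun c hc => ?_
      simpa using Submodule.mem_colon.mp h1 c hc
    · -- graded ideal
      intro r hr
      obtain ⟨s, hrs, -⟩ := gsum h𝒜.isInternal r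
      rw [hrs]
      refine Submodule.sum_mem _ fun γ _ => Ideal.subset_span ?_
      exact ⟨comp_mem_colon h𝒜 hℳ hNgr hCgr hr γ, γ, gcomp_mem _ _ _⟩
    · -- 2-absorbing
      intro r s t hrh hsh hth hrst
      by_contra hcon
      push_neg at hcon
      obtain ⟨hrs, hrt, hst⟩ := hcon
      rw [Submodule.mem_colon] at hrs hrt hst
      push_neg at hrs hrt hst
      obtain ⟨c₁, hc₁, h₁⟩ := hrs
      obtain ⟨c₂, hc₂, h₂⟩ := hst
      obtain ⟨c₃, hc₃, h₃⟩ := hrt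
      obtain ⟨U₁, hU₁, hNU₁, hm₁⟩ := exists_cgi hℳ.isInternal hNgr h₁
      obtain ⟨U₂, hU₂, hNU₂, hm₂⟩ := exists_cgi hℳ.isInternal hNgr h₂
      obtain ⟨U₃, hU₃, hNU₃, hm₃⟩ := exists_cgi hℳ.isInternal hNgr h₃
      have hle : r • s • t • C ≤ U₁ ⊓ U₂ ⊓ U₃ := by
        rw [smul_smul, smul_smul, smul_submodule_le_iff]
        intro c hc
        have := Submodule.mem_colon.mp hrst c hc
        exact le_inf (le_inf hNU₁ hNU₂) hNU₃ this
      rcases hSC r s t hrh hsh hth U₁ U₂ U₃ hU₁ hU₂ hU₃ hle with h | h | h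
      · refine hm₁ ?_
        have := (h.trans inf_le_left).trans inf_le_left
        rw [smul_smul, smul_submodule_le_iff] at this
        exact this c₁ hc₁
      · refine hm₂ ?_
        have := (h.trans inf_le_left).trans inf_le_right
        rw [smul_smul, smul_submodule_le_iff] at this
        exact this c₂ hc₂
      · refine hm₃ ?_
        have := h.trans inf_le_right
        rw [smul_smul, smul_submodule_le_iff] at this
        exact this c₃ hc₃
  · -- ⇐
    intro h
    refine ⟨hC0, hCgr, ?_⟩
    intro r s t hrh hsh hth U₁ U₂ U₃ hU₁ hU₂ hU₃ hle
    set Ninf : Submodule R M := U₁ ⊓ U₂ ⊓ U₃ with hNinf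
    have hgr : IsGradedSubmodule ℳ Ninf := by
      refine graded_of_comp hℳ.isInternal fun n hn α => ?_
      obtain ⟨⟨hn1, hn2⟩, hn3⟩ := hn
      exact ⟨⟨comp_mem_of_graded h𝒜 hℳ hU₁.1 hn1 α,
        comp_mem_of_graded h𝒜 hℳ hU₂.1 hn2 α⟩,
        comp_mem_of_graded h𝒜 hℳ hU₃.1 hn3 α⟩
    by_cases hCle : C ≤ Ninf
    · left
      rw [smul_smul, smul_submodule_le_iff]
      intro c hc
      exact hCle (C.smul_mem _ hc)
    · have habs := h Ninf hgr hCle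
      have hrst : r * s * t ∈ Ninf.colon C := by
        rw [Submodule.mem_colon]
        intro c hc
        rw [smul_smul, smul_smul, smul_submodule_le_iff] at hle
        exact hle c hc
      rcases habs.2.2 r s t hrh hsh hth hrst with h' | h' | h'
      · left
        rw [smul_smul, smul_submodule_le_iff]
        exact Submodule.mem_colon.mp h'
      · right; right
        rw [smul_smul, smul_submodule_le_iff]
        exact Submodule.mem_colon.mp h'
      · right; left
        rw [smul_smul, smul_submodule_le_iff]
        exact Submodule.mem_colon.mp h'
end

section
/- Let M₁, M₂ be graded R-modules and let f : M₁ → M₂ be a graded monomorphism. If C₁ is a graded strongly classical 2-absorbing second submodule of M₁, then f(C₁) is a graded strongly classical 2-absorbing second submodule of M₂. -/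
open Pointwise

section Comp
open DirectSum
variable {G : Type*} [Group G] [DecidableEq G] {M : Type*} [AddCommGroup M]
  (ℳ : G → AddSubgroup M)

noncomputable def gEquiv (h : DirectSum.IsInternal ℳ) : (⨁ α, ℳ α) ≃+ M :=
  AddEquiv.ofBijective (DirectSum.coeAddMonoidHom ℳ) h

lemma gEquiv_apply (h : DirectSum.IsInternal ℳ) (d : ⨁ α, ℳ α) :
    gEquiv ℳ h d = DirectSum.coeAddMonoidHom ℳ d := rfl

noncomputable def gComp (h : DirectSum.IsInternal ℳ) (γ : G) : M →+ M :=
  AddMonoidHom.mk' (fun x => (((gEquiv ℳ h).symm x) γ : M)) (by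
    intro x y
    show (((gEquiv ℳ h).symm (x + y)) γ : M) = _
    rw [map_add, DirectSum.add_apply]
    rfl)

lemma gComp_mem (h : DirectSum.IsInternal ℳ) (γ : G) (x : M) : gComp ℳ h γ x ∈ ℳ γ :=
  (((gEquiv ℳ h).symm x) γ).2

lemma gComp_homog (h : DirectSum.IsInternal ℳ) {ε : G} {y : M} (hy : y ∈ ℳ ε) (γ : G) :
    gComp ℳ h γ y = if γ = ε then y else 0 := by
  have h1 : gEquiv ℳ h (DirectSum.of (fun α => ℳ α) ε ⟨y, hy⟩) = y := by
    rw [gEquiv_apply, DirectSum.coeAddMonoidHom_of]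
  have h2 : (gEquiv ℳ h).symm y = DirectSum.of (fun α => ℳ α) ε ⟨y, hy⟩ :=
    (AddEquiv.symm_apply_eq _).2 h1.symm
  show (((gEquiv ℳ h).symm y) γ : M) = _
  rw [h2]
  by_cases hγ : γ = ε
  · subst hγ; rw [DirectSum.of_eq_same, if_pos rfl]
  · rw [DirectSum.of_eq_of_ne _ _ _ hγ, if_neg hγ]; rfl

lemma homog_induction (h : DirectSum.IsInternal ℳ) {p : M → Prop} (h0 : p 0)
    (hadd : ∀ x y, p x → p y → p (x + y))
    (hhom : ∀ (α : G) (m : M), m ∈ ℳ α → p m) : ∀ x, p x := by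
  intro x
  obtain ⟨d, rfl⟩ := h.surjective x
  induction d using DirectSum.induction_on with
  | zero => simpa using h0
  | of i y => rw [DirectSum.coeAddMonoidHom_of]; exact hhom i y y.2
  | add a b ha hb => rw [map_add]; exact hadd _ _ ha hb

lemma sum_gComp (h : DirectSum.IsInternal ℳ) (x : M) :
    ∃ s : Finset G, x = ∑ α ∈ s, gComp ℳ h α x := by
  classical
  set d := (gEquiv ℳ h).symm x with hd
  refine ⟨d.support, ?_⟩
  have h1 : x = gEquiv ℳ h d := ((gEquiv ℳ h).apply_symm_apply x).symm
  conv_lhs => rw [h1, ← DirectSum.sum_support_of d]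
  rw [map_sum]
  refine Finset.sum_congr rfl fun α _ => ?_
  rw [gEquiv_apply, DirectSum.coeAddMonoidHom_of]
  rfl



end Comp

section Graded2
variable {G : Type*} [Group G] [DecidableEq G] {R : Type*} [CommRing R]
  {M : Type*} [AddCommGroup M] [Module R M]
  (𝒜 : G → AddSubgroup R) (ℳ : G → AddSubgroup M)

lemma gComp_smul (h𝒜 : IsRingGrading 𝒜) (hℳ : IsModuleGrading 𝒜 ℳ)
    {β : G} {r : R} (hr : r ∈ 𝒜 β) (γ : G) :
    ∀ x : M, gComp ℳ hℳ.isInternal γ (r • x) = r • gComp ℳ hℳ.isInternal (β⁻¹ * γ) x := by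
  refine homog_induction ℳ hℳ.isInternal ?_ ?_ ?_
  · rw [smul_zero, map_zero, map_zero, smul_zero]
  · intro x y hx hy
    rw [smul_add, map_add, map_add, hx, hy, smul_add]
  · intro δ m hm
    have h1 : r • m ∈ ℳ (β * δ) := hℳ.smul_mem hr hm
    rw [gComp_homog ℳ hℳ.isInternal h1, gComp_homog ℳ hℳ.isInternal hm]
    by_cases hc : γ = β * δ
    · rw [if_pos hc, if_pos (by rw [hc]; group)]
    · rw [if_neg hc, if_neg (fun hc2 => hc (by rw [← hc2]; group)), smul_zero]

/-- homogeneous components of elements of a graded submodule stay in the submodule -/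
lemma gComp_mem_of_graded (h𝒜 : IsRingGrading 𝒜) (hℳ : IsModuleGrading 𝒜 ℳ)
    {N : Submodule R M} (hN : IsGradedSubmodule ℳ N) :
    ∀ x ∈ N, ∀ γ : G, gComp ℳ hℳ.isInternal γ x ∈ N := by
  intro x hx γ
  have hx' := hN x hx
  clear hx
  revert γ
  induction hx' using Submodule.span_induction with
  | mem m hm =>
    obtain ⟨hmN, ε, hmε⟩ := hm
    intro γ
    rw [gComp_homog ℳ hℳ.isInternal hmε]
    split <;> simp [hmN]
  | zero => intro γ; rw [map_zero]; exact N.zero_mem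
  | add a b _ _ ha hb => intro γ; rw [map_add]; exact N.add_mem (ha γ) (hb γ)
  | smul r a _ ha =>
    -- induct on r using homogeneous decomposition of R
    revert ha
    refine homog_induction 𝒜 h𝒜.isInternal (p := fun r =>
      (∀ γ, gComp ℳ hℳ.isInternal γ a ∈ N) → ∀ γ, gComp ℳ hℳ.isInternal γ (r • a) ∈ N)
      ?_ ?_ ?_ r
    · intro _ γ
      show gComp ℳ hℳ.isInternal γ ((0:R) • a) ∈ N
      rw [zero_smul, map_zero]; exact N.zero_mem
    · intro r₁ r₂ h1 h2 ha γ
      show gComp ℳ hℳ.isInternal γ ((r₁ + r₂) • a) ∈ N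
      rw [add_smul, map_add]
      exact N.add_mem (h1 ha γ) (h2 ha γ)
    · intro β rr hrr ha γ
      show gComp ℳ hℳ.isInternal γ (rr • a) ∈ N
      rw [gComp_smul 𝒜 ℳ h𝒜 hℳ hrr]
      exact N.smul_mem rr (ha _)

lemma graded_sup {A B : Submodule R M} (hA : IsGradedSubmodule ℳ A)
    (hB : IsGradedSubmodule ℳ B) : IsGradedSubmodule ℳ (A ⊔ B) := by
  intro n hn
  obtain ⟨a, ha, b, hb, rfl⟩ := Submodule.mem_sup.1 hn
  have hsub : ∀ C : Submodule R M, C ≤ A ⊔ B →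
      Submodule.span R {m : M | m ∈ C ∧ ∃ α, m ∈ ℳ α} ≤
        Submodule.span R {m : M | m ∈ A ⊔ B ∧ ∃ α, m ∈ ℳ α} :=
    fun C hC => Submodule.span_mono (fun m hm => ⟨hC hm.1, hm.2⟩)
  exact Submodule.add_mem _ (hsub A le_sup_left (hA a ha)) (hsub B le_sup_right (hB b hb))

lemma graded_span_homog (h𝒜 : IsRingGrading 𝒜) (hℳ : IsModuleGrading 𝒜 ℳ)
    {x : M} {α : G} (hx : x ∈ ℳ α) :
    IsGradedSubmodule ℳ (Submodule.span R {x}) := by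
  intro n hn
  obtain ⟨r, rfl⟩ := Submodule.mem_span_singleton.1 hn
  refine homog_induction 𝒜 h𝒜.isInternal (p := fun r =>
    r • x ∈ Submodule.span R {m : M | m ∈ Submodule.span R {x} ∧ ∃ α, m ∈ ℳ α}) ?_ ?_ ?_ r
  · show (0:R) • x ∈ _
    rw [zero_smul]; exact Submodule.zero_mem _
  · intro r₁ r₂ h1 h2
    show (r₁ + r₂) • x ∈ _
    rw [add_smul]; exact Submodule.add_mem _ h1 h2
  · intro β rr hrr
    show rr • x ∈ _
    exact Submodule.subset_span ⟨Submodule.smul_mem _ _ (Submodule.mem_span_singleton_self x),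
      β * α, hℳ.smul_mem hrr hx⟩

end Graded2

section TwoMod
variable {G : Type*} [Group G] [DecidableEq G] {R : Type*} [CommRing R]
  {M₁ M₂ : Type*} [AddCommGroup M₁] [Module R M₁] [AddCommGroup M₂] [Module R M₂]
  (𝒜 : G → AddSubgroup R) (ℳ₁ : G → AddSubgroup M₁) (ℳ₂ : G → AddSubgroup M₂)
  (f : M₁ →ₗ[R] M₂)

lemma gComp_map (h₁ : DirectSum.IsInternal ℳ₁) (h₂ : DirectSum.IsInternal ℳ₂)
    (hfgr : ∀ α : G, ∀ m ∈ ℳ₁ α, f m ∈ ℳ₂ α) (γ : G) :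
    ∀ x : M₁, f (gComp ℳ₁ h₁ γ x) = gComp ℳ₂ h₂ γ (f x) := by
  refine homog_induction ℳ₁ h₁ ?_ ?_ ?_
  · simp
  · intro x y hx hy
    rw [map_add, map_add, map_add, map_add, hx, hy]
  · intro δ m hm
    rw [gComp_homog ℳ₁ h₁ hm, gComp_homog ℳ₂ h₂ (hfgr δ m hm)]
    split <;> simp

lemma graded_map {C : Submodule R M₁} (hfgr : ∀ α : G, ∀ m ∈ ℳ₁ α, f m ∈ ℳ₂ α)
    (hC : IsGradedSubmodule ℳ₁ C) : IsGradedSubmodule ℳ₂ (C.map f) := by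
  rintro n ⟨m, hm, rfl⟩
  have h2 : f m ∈ (Submodule.span R {x : M₁ | x ∈ C ∧ ∃ α, x ∈ ℳ₁ α}).map f :=
    ⟨m, hC m hm, rfl⟩
  rw [Submodule.map_span] at h2
  refine Submodule.span_mono ?_ h2
  rintro _ ⟨y, ⟨hyC, α, hyα⟩, rfl⟩
  exact ⟨⟨y, hyC, rfl⟩, α, hfgr α y hyα⟩

lemma graded_comap (h𝒜 : IsRingGrading 𝒜) (hℳ₁ : IsModuleGrading 𝒜 ℳ₁)
    (hℳ₂ : IsModuleGrading 𝒜 ℳ₂) (hfgr : ∀ α : G, ∀ m ∈ ℳ₁ α, f m ∈ ℳ₂ α)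
    {U : Submodule R M₂} (hU : IsGradedSubmodule ℳ₂ U) :
    IsGradedSubmodule ℳ₁ (U.comap f) := by
  intro n hn
  obtain ⟨s, hs⟩ := sum_gComp ℳ₁ hℳ₁.isInternal n
  rw [hs]
  refine Submodule.sum_mem _ fun α _ => Submodule.subset_span ⟨?_, α, gComp_mem ℳ₁ _ α n⟩
  show f (gComp ℳ₁ hℳ₁.isInternal α n) ∈ U
  rw [gComp_map ℳ₁ ℳ₂ f hℳ₁.isInternal hℳ₂.isInternal hfgr]
  exact gComp_mem_of_graded 𝒜 ℳ₂ h𝒜 hℳ₂ hU (f n) hn α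

lemma cirr_comap (h𝒜 : IsRingGrading 𝒜) (hℳ₁ : IsModuleGrading 𝒜 ℳ₁)
    (hℳ₂ : IsModuleGrading 𝒜 ℳ₂) (hfgr : ∀ α : G, ∀ m ∈ ℳ₁ α, f m ∈ ℳ₂ α)
    {U : Submodule R M₂} (hU : CompletelyGradedIrreducible ℳ₂ U)
    (hVtop : U.comap f ≠ ⊤) : CompletelyGradedIrreducible ℳ₁ (U.comap f) := by
  obtain ⟨hUgr, hUtop, hUirr⟩ := hU
  set V := U.comap f with hVdef
  have hVgr : IsGradedSubmodule ℳ₁ V := graded_comap 𝒜 ℳ₁ ℳ₂ f h𝒜 hℳ₁ hℳ₂ hfgr hUgr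
  refine ⟨hVgr, hVtop, ?_⟩
  intro S hSgr hVS
  by_contra hVnS
  -- every member of S is strictly above V
  have hStrict : ∀ D ∈ S, V < D := by
    intro D hD
    refine lt_of_le_of_ne (hVS ▸ sInf_le hD) ?_
    rintro rfl; exact hVnS hD
  -- sInf of graded submodules strictly above U is strictly above U
  set W : Submodule R M₂ := sInf {D : Submodule R M₂ | IsGradedSubmodule ℳ₂ D ∧ U < D} with hW
  have hUW : U ≤ W := le_sInf fun D hD => hD.2.le
  have hWne : W ≠ U := by
    intro hWU
    have := hUirr {D : Submodule R M₂ | IsGradedSubmodule ℳ₂ D ∧ U < D}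
      (fun D hD => hD.1) hWU.symm
    exact absurd rfl this.2.ne
  obtain ⟨w, hwW, hwU⟩ := SetLike.exists_of_lt (lt_of_le_of_ne hUW (Ne.symm hWne))
  -- for each D in S, produce z ∈ D with w - f z ∈ U
  have hkey : ∀ D ∈ S, ∃ z ∈ D, w - f z ∈ U := by
    intro D hD
    -- a homogeneous element of D not in V
    have hhom : ∃ x, x ∈ D ∧ x ∉ V ∧ ∃ α, x ∈ ℳ₁ α := by
      by_contra hcon
      push_neg at hcon
      obtain ⟨y, hyD, hyV⟩ := SetLike.exists_of_lt (hStrict D hD)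
      refine hyV ((Submodule.span_le.2 ?_) (hSgr D hD y hyD))
      rintro m ⟨hmD, α, hmα⟩
      by_contra hmV
      exact (hcon m hmD hmV) α hmα
    obtain ⟨x, hxD, hxV, α, hxα⟩ := hhom
    set E : Submodule R M₁ := V ⊔ Submodule.span R {x} with hE
    have hEgr : IsGradedSubmodule ℳ₁ E :=
      graded_sup ℳ₁ hVgr (graded_span_homog 𝒜 ℳ₁ h𝒜 hℳ₁ hxα)
    have hUlt : U < U ⊔ E.map f := by
      refine lt_of_le_of_ne le_sup_left ?_
      intro heq
      have hmapE : E.map f ≤ U := heq ▸ le_sup_right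
      have : E ≤ V := fun e he => hmapE ⟨e, he, rfl⟩
      exact hxV (this (Submodule.mem_sup_right (Submodule.mem_span_singleton_self x)))
    have hWle : W ≤ U ⊔ E.map f :=
      sInf_le ⟨graded_sup ℳ₂ hUgr (graded_map ℳ₁ ℳ₂ f hfgr hEgr), hUlt⟩
    obtain ⟨u, hu, z', hz', hwz⟩ := Submodule.mem_sup.1 (hWle hwW)
    obtain ⟨e, he, rfl⟩ := hz'
    obtain ⟨v, hv, x', hx', hex⟩ := Submodule.mem_sup.1 he
    obtain ⟨rr, rfl⟩ := Submodule.mem_span_singleton.1 hx'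
    refine ⟨rr • x, D.smul_mem rr hxD, ?_⟩
    have : w - f (rr • x) = u + f v := by
      rw [← hwz, ← hex, map_add]; abel
    rw [this]
    exact U.add_mem hu hv
  -- now derive a contradiction
  have hSne : S.Nonempty := by
    rcases Set.eq_empty_or_nonempty S with h | h
    · exact absurd (by rw [hVS, h, sInf_empty]) hVtop
    · exact h
  obtain ⟨D₀, hD₀⟩ := hSne
  obtain ⟨z₀, hz₀D, hz₀U⟩ := hkey D₀ hD₀
  have hz₀V : z₀ ∉ V := by
    intro hz
    exact hwU (by simpa using U.add_mem hz₀U (hz : f z₀ ∈ U))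
  refine hz₀V ?_
  rw [hVS]
  refine Submodule.mem_sInf.2 fun D hD => ?_
  obtain ⟨z, hzD, hzU⟩ := hkey D hD
  have hdiff : z₀ - z ∈ V := by
    show f (z₀ - z) ∈ U
    rw [map_sub]
    have := U.sub_mem hzU hz₀U
    simpa using this
  have := (hStrict D hD).le hdiff
  simpa using D.add_mem this hzD

lemma map_psmul (r : R) (S : Submodule R M₁) : (r • S).map f = r • (S.map f) := by
  ext x
  constructor
  · rintro ⟨y, ⟨z, hz, rfl⟩, rfl⟩
    exact ⟨f z, ⟨z, hz, rfl⟩, (map_smul f r z).symm⟩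
  · rintro ⟨y, ⟨z, hz, rfl⟩, rfl⟩
    exact ⟨r • z, ⟨z, hz, rfl⟩, map_smul f r z⟩

end TwoMod

lemma aux_fill {R M : Type*} [CommRing R] [AddCommGroup M] [Module R M]
    {P : Submodule R M → Prop} {X A B C : Submodule R M} {V₁ V₂ V₃ : Submodule R M}
    (cond : ∀ W₁ W₂ W₃ : Submodule R M, P W₁ → P W₂ → P W₃ → X ≤ W₁ ⊓ W₂ ⊓ W₃ →
      A ≤ W₁ ⊓ W₂ ⊓ W₃ ∨ B ≤ W₁ ⊓ W₂ ⊓ W₃ ∨ C ≤ W₁ ⊓ W₂ ⊓ W₃)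
    (h1 : V₁ = ⊤ ∨ P V₁) (h2 : V₂ = ⊤ ∨ P V₂) (h3 : V₃ = ⊤ ∨ P V₃)
    (hX : X ≤ V₁ ⊓ V₂ ⊓ V₃) :
    A ≤ V₁ ⊓ V₂ ⊓ V₃ ∨ B ≤ V₁ ⊓ V₂ ⊓ V₃ ∨ C ≤ V₁ ⊓ V₂ ⊓ V₃ := by
  simp only [le_inf_iff] at hX ⊢
  obtain ⟨⟨hX1, hX2⟩, hX3⟩ := hX
  rcases h1 with h1 | h1 <;> rcases h2 with h2 | h2 <;> rcases h3 with h3 | h3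
  · left; simp [h1, h2, h3]
  · have := cond V₃ V₃ V₃ h3 h3 h3 (by simp only [le_inf_iff]; exact ⟨⟨hX3, hX3⟩, hX3⟩)
    simp only [le_inf_iff, h1, h2, le_top, true_and, and_true] at this ⊢
    tauto
  · have := cond V₂ V₂ V₂ h2 h2 h2 (by simp only [le_inf_iff]; exact ⟨⟨hX2, hX2⟩, hX2⟩)
    simp only [le_inf_iff, h1, h3, le_top, true_and, and_true] at this ⊢
    tauto
  · have := cond V₂ V₂ V₃ h2 h2 h3 (by simp only [le_inf_iff]; exact ⟨⟨hX2, hX2⟩, hX3⟩)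
    simp only [le_inf_iff, h1, le_top, true_and, and_true] at this ⊢
    tauto
  · have := cond V₁ V₁ V₁ h1 h1 h1 (by simp only [le_inf_iff]; exact ⟨⟨hX1, hX1⟩, hX1⟩)
    simp only [le_inf_iff, h2, h3, le_top, true_and, and_true] at this ⊢
    tauto
  · have := cond V₁ V₁ V₃ h1 h1 h3 (by simp only [le_inf_iff]; exact ⟨⟨hX1, hX1⟩, hX3⟩)
    simp only [le_inf_iff, h2, le_top, true_and, and_true] at this ⊢
    tauto
  · have := cond V₁ V₂ V₂ h1 h2 h2 (by simp only [le_inf_iff]; exact ⟨⟨hX1, hX2⟩, hX2⟩)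
    simp only [le_inf_iff, h3, le_top, true_and, and_true] at this ⊢
    tauto
  · exact cond V₁ V₂ V₃ h1 h2 h3 (by simp only [le_inf_iff]; exact ⟨⟨hX1, hX2⟩, hX3⟩)
      |>.imp (by simp only [le_inf_iff]; tauto)
        (Or.imp (by simp only [le_inf_iff]; tauto) (by simp only [le_inf_iff]; tauto))

theorem stmt14 {G : Type*} [Group G] [DecidableEq G] {R : Type*} [CommRing R]
    {M₁ M₂ : Type*} [AddCommGroup M₁] [Module R M₁] [AddCommGroup M₂] [Module R M₂]
    (𝒜 : G → AddSubgroup R) (ℳ₁ : G → AddSubgroup M₁) (ℳ₂ : G → AddSubgroup M₂)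
    (h𝒜 : IsRingGrading 𝒜) (hℳ₁ : IsModuleGrading 𝒜 ℳ₁)
    (hℳ₂ : IsModuleGrading 𝒜 ℳ₂)
    (f : M₁ →ₗ[R] M₂) (hfgr : ∀ α : G, ∀ m ∈ ℳ₁ α, f m ∈ ℳ₂ α)
    (hfinj : Function.Injective f)
    (C₁ : Submodule R M₁) (hC₁ : IsGrStronglyClassical2AbsorbingSecond 𝒜 ℳ₁ C₁) :
    IsGrStronglyClassical2AbsorbingSecond 𝒜 ℳ₂ (Submodule.map f C₁) := by
  obtain ⟨hC₁ne, hC₁gr, hC₁cond⟩ := hC₁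
  refine ⟨?_, graded_map ℳ₁ ℳ₂ f hfgr hC₁gr, ?_⟩
  · intro hbot
    refine hC₁ne (Submodule.eq_bot_iff _ |>.2 fun x hx => ?_)
    have : f x ∈ Submodule.map f C₁ := ⟨x, hx, rfl⟩
    rw [hbot, Submodule.mem_bot] at this
    exact hfinj (by simpa using this)
  · intro r s t hr hs ht U₁ U₂ U₃ hU₁ hU₂ hU₃ hle
    have heq : ∀ X : Submodule R M₁,
        (X.map f ≤ U₁ ⊓ U₂ ⊓ U₃) ↔ X ≤ U₁.comap f ⊓ U₂.comap f ⊓ U₃.comap f := by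
      intro X
      rw [Submodule.map_le_iff_le_comap, Submodule.comap_inf, Submodule.comap_inf]
    have hVcase : ∀ U : Submodule R M₂, CompletelyGradedIrreducible ℳ₂ U →
        (U.comap f = ⊤ ∨ CompletelyGradedIrreducible ℳ₁ (U.comap f)) := by
      intro U hU
      by_cases h : U.comap f = ⊤
      · exact Or.inl h
      · exact Or.inr (cirr_comap 𝒜 ℳ₁ ℳ₂ f h𝒜 hℳ₁ hℳ₂ hfgr hU h)
    have hle' : r • s • t • C₁ ≤ U₁.comap f ⊓ U₂.comap f ⊓ U₃.comap f := by
      rw [← heq, map_psmul, map_psmul, map_psmul]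
      exact hle
    have hres := aux_fill (P := CompletelyGradedIrreducible ℳ₁)
      (X := r • s • t • C₁) (A := r • s • C₁) (B := s • t • C₁) (C := r • t • C₁)
      (fun W₁ W₂ W₃ hW₁ hW₂ hW₃ hX => hC₁cond r s t hr hs ht W₁ W₂ W₃ hW₁ hW₂ hW₃ hX)
      (hVcase U₁ hU₁) (hVcase U₂ hU₂) (hVcase U₃ hU₃) hle'
    refine hres.imp ?_ (Or.imp ?_ ?_) <;> intro h <;>
      · rw [← heq] at h
        rw [map_psmul, map_psmul] at h
        exact h
end

section
/- If S₁ and S₂ are graded weakly second submodules of M, then S = S₁ + S₂ is a graded strongly classical 2-absorbing second submodule of M. -/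
open Pointwise

section AuxProof

open DirectSum

variable {G : Type*} [Group G] [DecidableEq G] {R : Type*} [CommRing R]
  {M : Type*} [AddCommGroup M] [Module R M]

/-- The decomposition equivalence coming from an internal direct sum of additive subgroups. -/
noncomputable def dEquiv {ι : Type*} [DecidableEq ι] {A : Type*} [AddCommGroup A]
    (ℬ : ι → AddSubgroup A) (h : DirectSum.IsInternal ℬ) : A ≃+ ⨁ i, ℬ i :=
  (AddEquiv.ofBijective (DirectSum.coeAddMonoidHom ℬ) h).symm

lemma dEquiv_homog {ι : Type*} [DecidableEq ι] {A : Type*} [AddCommGroup A]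
    (ℬ : ι → AddSubgroup A) (h : DirectSum.IsInternal ℬ) {y : A} {α : ι}
    (hy : y ∈ ℬ α) :
    dEquiv ℬ h y = DirectSum.of (fun i => ℬ i) α ⟨y, hy⟩ := by
  rw [dEquiv, AddEquiv.symm_apply_eq]
  exact (DirectSum.coeAddMonoidHom_of ℬ α ⟨y, hy⟩).symm

open scoped Classical in
lemma dEquiv_sum {ι : Type*} [DecidableEq ι] {A : Type*} [AddCommGroup A]
    (ℬ : ι → AddSubgroup A) (h : DirectSum.IsInternal ℬ) (x : A) :
    x = ∑ γ ∈ (DFinsupp.support (dEquiv ℬ h x)), ((dEquiv ℬ h x γ : ℬ γ) : A) := by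
  conv_lhs => rw [← (AddEquiv.ofBijective (DirectSum.coeAddMonoidHom ℬ) h).apply_symm_apply x]
  rw [show (AddEquiv.ofBijective (DirectSum.coeAddMonoidHom ℬ) h).symm x = dEquiv ℬ h x from rfl]
  conv_lhs => rw [← DirectSum.sum_support_of (dEquiv ℬ h x)]
  rw [map_sum]
  exact Finset.sum_congr rfl fun γ _ => by
    exact DirectSum.coeAddMonoidHom_of ℬ γ _

/-- The component of a homogeneous element of a submodule stays in the submodule. -/
lemma homog_comp_mem (ℳ : G → AddSubgroup M) (hi : DirectSum.IsInternal ℳ)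
    {N : Submodule R M} {y : M} {α : G} (hy : y ∈ ℳ α) (hyN : y ∈ N) (γ : G) :
    ((dEquiv ℳ hi y γ : ℳ γ) : M) ∈ N := by
  rw [dEquiv_homog ℳ hi hy]
  rcases eq_or_ne α γ with rfl | hne
  · rw [DirectSum.of_eq_same]; exact hyN
  · rw [DirectSum.of_eq_of_ne _ _ _ hne.symm, ZeroMemClass.coe_zero]; exact N.zero_mem

/-- Every homogeneous component of an element of a graded submodule lies in the submodule. -/
lemma comp_mem (𝒜 : G → AddSubgroup R) (ℳ : G → AddSubgroup M)
    (h𝒜 : IsRingGrading 𝒜) (hℳ : IsModuleGrading 𝒜 ℳ) {N : Submodule R M}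
    (hN : IsGradedSubmodule ℳ N) {n : M} (hn : n ∈ N) (γ : G) :
    ((dEquiv ℳ hℳ.isInternal n γ : ℳ γ) : M) ∈ N := by
  classical
  have h' := hN n hn
  refine Submodule.span_induction
    (p := fun x _ => ∀ γ : G, ((dEquiv ℳ hℳ.isInternal x γ : ℳ γ) : M) ∈ N)
    ?_ ?_ ?_ ?_ h' γ
  · rintro m ⟨hmN, α, hα⟩ γ
    exact homog_comp_mem ℳ hℳ.isInternal hα hmN γ
  · intro γ
    rw [map_zero]
    simp
  · intro x y _ _ ihx ihy γ
    rw [map_add, DirectSum.add_apply, AddSubgroup.coe_add]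
    exact N.add_mem (ihx γ) (ihy γ)
  · intro c x _ ih γ
    have hcx : c • x =
        ∑ β ∈ (DFinsupp.support (dEquiv 𝒜 h𝒜.isInternal c)),
          ∑ δ ∈ (DFinsupp.support (dEquiv ℳ hℳ.isInternal x)),
            ((dEquiv 𝒜 h𝒜.isInternal c β : 𝒜 β) : R) •
              ((dEquiv ℳ hℳ.isInternal x δ : ℳ δ) : M) := by
      conv_lhs => rw [dEquiv_sum 𝒜 h𝒜.isInternal c, dEquiv_sum ℳ hℳ.isInternal x]
      rw [Finset.sum_smul]
      exact Finset.sum_congr rfl fun β _ => Finset.smul_sum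
    rw [hcx, map_sum]
    rw [DFinsupp.finset_sum_apply]
    rw [AddSubmonoidClass.coe_finset_sum]
    refine Submodule.sum_mem N fun β _ => ?_
    rw [map_sum, DFinsupp.finset_sum_apply, AddSubmonoidClass.coe_finset_sum]
    refine Submodule.sum_mem N fun δ _ => ?_
    exact homog_comp_mem ℳ hℳ.isInternal
      (hℳ.smul_mem (dEquiv 𝒜 h𝒜.isInternal c β).2 (dEquiv ℳ hℳ.isInternal x δ).2)
      (N.smul_mem _ (ih δ)) γ

/-- The intersection of two graded submodules is graded. -/
lemma inf_graded (𝒜 : G → AddSubgroup R) (ℳ : G → AddSubgroup M)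
    (h𝒜 : IsRingGrading 𝒜) (hℳ : IsModuleGrading 𝒜 ℳ) {N₁ N₂ : Submodule R M}
    (hN₁ : IsGradedSubmodule ℳ N₁) (hN₂ : IsGradedSubmodule ℳ N₂) :
    IsGradedSubmodule ℳ (N₁ ⊓ N₂) := by
  classical
  rintro n ⟨hn₁, hn₂⟩
  rw [dEquiv_sum ℳ hℳ.isInternal n]
  refine Submodule.sum_mem _ fun γ _ => Submodule.subset_span ?_
  exact ⟨⟨comp_mem 𝒜 ℳ h𝒜 hℳ hN₁ hn₁ γ, comp_mem 𝒜 ℳ h𝒜 hℳ hN₂ hn₂ γ⟩,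
    γ, (dEquiv ℳ hℳ.isInternal n γ).2⟩

/-- The sum of two graded submodules is graded. -/
lemma sup_graded (ℳ : G → AddSubgroup M) {N₁ N₂ : Submodule R M}
    (hN₁ : IsGradedSubmodule ℳ N₁) (hN₂ : IsGradedSubmodule ℳ N₂) :
    IsGradedSubmodule ℳ (N₁ ⊔ N₂) := by
  intro n hn
  obtain ⟨a, ha, b, hb, rfl⟩ := Submodule.mem_sup.mp hn
  have hsub1 : {m : M | m ∈ N₁ ∧ ∃ α, m ∈ ℳ α} ⊆ {m : M | m ∈ N₁ ⊔ N₂ ∧ ∃ α, m ∈ ℳ α} :=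
    fun m hm => ⟨le_sup_left (a := N₁) (b := N₂) hm.1, hm.2⟩
  have hsub2 : {m : M | m ∈ N₂ ∧ ∃ α, m ∈ ℳ α} ⊆ {m : M | m ∈ N₁ ⊔ N₂ ∧ ∃ α, m ∈ ℳ α} :=
    fun m hm => ⟨le_sup_right (a := N₁) (b := N₂) hm.1, hm.2⟩
  exact Submodule.add_mem _ (Submodule.span_mono hsub1 (hN₁ a ha))
    (Submodule.span_mono hsub2 (hN₂ b hb))

open Pointwise in
lemma pointwise_smul_le_iff {a : R} {S N : Submodule R M} :
    a • S ≤ N ↔ ∀ x ∈ S, a • x ∈ N := by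
  constructor
  · intro h x hx; exact h (Submodule.smul_mem_pointwise_smul x a S hx)
  · rintro h y ⟨x, hx, rfl⟩; exact h x hx

open Pointwise in
/-- From a graded weakly second submodule, a triple product landing in a graded submodule
forces at least two of the three pairwise products to land there. -/
lemma two_of_three (𝒜 : G → AddSubgroup R) (ℳ : G → AddSubgroup M)
    (h𝒜 : IsRingGrading 𝒜) {S : Submodule R M} (hS : IsGrWeaklySecond 𝒜 ℳ S)
    {r s t : R} (hr : ∃ α, r ∈ 𝒜 α) (hs : ∃ β, s ∈ 𝒜 β) (ht : ∃ γ, t ∈ 𝒜 γ)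
    {N : Submodule R M} (hN : IsGradedSubmodule ℳ N)
    (h : r • s • t • S ≤ N) :
    (r • s • S ≤ N ∧ r • t • S ≤ N) ∨ (r • s • S ≤ N ∧ s • t • S ≤ N) ∨
      (r • t • S ≤ N ∧ s • t • S ≤ N) := by
  obtain ⟨α, hrα⟩ := hr
  obtain ⟨β, hsβ⟩ := hs
  obtain ⟨γ, htγ⟩ := ht
  have hst : ∃ δ, s * t ∈ 𝒜 δ := ⟨β * γ, h𝒜.mul_mem hsβ htγ⟩
  have h' : r • (s * t) • S ≤ N := by
    rw [smul_smul, ← mul_assoc, ← smul_smul, ← smul_smul] at *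
    exact h
  rcases hS.2.2 r (s * t) ⟨α, hrα⟩ hst N hN h' with hr' | hst'
  · left
    constructor
    · calc r • s • S = s • r • S := smul_comm r s S
        _ ≤ s • N := smul_mono_right s hr'
        _ ≤ N := Submodule.smul_le_self_of_tower s N
    · calc r • t • S = t • r • S := smul_comm r t S
        _ ≤ t • N := smul_mono_right t hr'
        _ ≤ N := Submodule.smul_le_self_of_tower t N
  · have hst2 : s • t • S ≤ N := by rwa [smul_smul]
    rcases hS.2.2 s t ⟨β, hsβ⟩ ⟨γ, htγ⟩ N hN hst2 with hs' | ht'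
    · right; left
      refine ⟨?_, hst2⟩
      calc r • s • S ≤ r • N := smul_mono_right r hs'
        _ ≤ N := Submodule.smul_le_self_of_tower r N
    · right; right
      refine ⟨?_, hst2⟩
      calc r • t • S ≤ r • N := smul_mono_right r ht'
        _ ≤ N := Submodule.smul_le_self_of_tower r N

end AuxProof


theorem stmt16 {G : Type*} [Group G] [DecidableEq G] {R : Type*} [CommRing R]
    {M : Type*} [AddCommGroup M] [Module R M]
    (𝒜 : G → AddSubgroup R) (ℳ : G → AddSubgroup M)
    (h𝒜 : IsRingGrading 𝒜) (hℳ : IsModuleGrading 𝒜 ℳ)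
    (S₁ S₂ : Submodule R M) (h₁ : IsGrWeaklySecond 𝒜 ℳ S₁)
    (h₂ : IsGrWeaklySecond 𝒜 ℳ S₂) :
    IsGrStronglyClassical2AbsorbingSecond 𝒜 ℳ (S₁ ⊔ S₂) := by
  refine ⟨?_, sup_graded ℳ h₁.2.1 h₂.2.1, ?_⟩
  · intro hbot
    exact h₁.1 (le_bot_iff.mp (le_trans le_sup_left hbot.le))
  · intro r s t hr hs ht U₁ U₂ U₃ hU₁ hU₂ hU₃ hle
    set N : Submodule R M := U₁ ⊓ U₂ ⊓ U₃ with hNdef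
    have hNgr : IsGradedSubmodule ℳ N :=
      inf_graded 𝒜 ℳ h𝒜 hℳ (inf_graded 𝒜 ℳ h𝒜 hℳ hU₁.1 hU₂.1) hU₃.1
    rw [Submodule.smul_sup', Submodule.smul_sup', Submodule.smul_sup', sup_le_iff] at hle
    have k₁ := two_of_three 𝒜 ℳ h𝒜 h₁ hr hs ht hNgr hle.1
    have k₂ := two_of_three 𝒜 ℳ h𝒜 h₂ hr hs ht hNgr hle.2
    simp only [Submodule.smul_sup', sup_le_iff]
    tauto
end

section
/- Let R = R₁ × R₂ be the product of G-graded commutative rings R₁ and R₂ (a G-graded ring with components (R₁)_α × (R₂)_α), let M₁ be a graded R₁-module and M₂ a graded R₂-module, and let M = M₁ × M₂ with the grading (M₁)_α × (M₂)_α, a graded R-module. Let C₁ be a non-zero graded submodule of M₁. Then C = C₁ × 0 is a graded strongly classical 2-absorbing second submodule of M if and only if C₁ is a graded strongly classical 2-absorbing second submodule of M₁. -/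
open Pointwise

section ProdSetup

variable {R₁ R₂ : Type*} [CommRing R₁] [CommRing R₂]
  {M₁ M₂ : Type*} [AddCommGroup M₁] [Module R₁ M₁] [AddCommGroup M₂] [Module R₂ M₂]

/-- The componentwise action of `R₁ × R₂` on `M₁ × M₂`. -/
instance prodPairSMul : SMul (R₁ × R₂) (M₁ × M₂) :=
  ⟨fun r m => (r.1 • m.1, r.2 • m.2)⟩

/-- `M₁ × M₂` is a module over the product ring `R₁ × R₂`, acting componentwise. -/
instance prodPairModule : Module (R₁ × R₂) (M₁ × M₂) where
  one_smul m := Prod.ext (one_smul _ _) (one_smul _ _)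
  mul_smul r s m := Prod.ext (mul_smul _ _ _) (mul_smul _ _ _)
  smul_zero r := Prod.ext (smul_zero _) (smul_zero _)
  smul_add r m n := Prod.ext (smul_add _ _ _) (smul_add _ _ _)
  add_smul r s m := Prod.ext (add_smul _ _ _) (add_smul _ _ _)
  zero_smul m := Prod.ext (zero_smul _ _) (zero_smul _ _)

/-- The submodule `C₁ × C₂` of the `(R₁ × R₂)`-module `M₁ × M₂`. -/
def prodPairSubmodule (C₁ : Submodule R₁ M₁) (C₂ : Submodule R₂ M₂) :
    Submodule (R₁ × R₂) (M₁ × M₂) where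
  carrier := (C₁ : Set M₁) ×ˢ (C₂ : Set M₂)
  add_mem' ha hb := ⟨C₁.add_mem ha.1 hb.1, C₂.add_mem ha.2 hb.2⟩
  zero_mem' := ⟨C₁.zero_mem, C₂.zero_mem⟩
  smul_mem' r m hm := ⟨C₁.smul_mem r.1 hm.1, C₂.smul_mem r.2 hm.2⟩

end ProdSetup

section AuxGeneral

variable {G : Type*} [Group G] [DecidableEq G]
variable {R : Type*} [CommRing R] {M : Type*} [AddCommGroup M] [Module R M]

lemma mem_pointwise_smul_iff' {r : R} {P : Submodule R M} {x : M} :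
    x ∈ r • P ↔ ∃ y ∈ P, r • y = x := by
  rw [← SetLike.mem_coe, Submodule.coe_pointwise_smul]
  exact Set.mem_smul_set

lemma isGraded_top' {ℳ : G → AddSubgroup M} (h : DirectSum.IsInternal ℳ) :
    IsGradedSubmodule ℳ (⊤ : Submodule R M) := by
  intro n hn
  clear hn
  obtain ⟨x, hx⟩ := h.surjective n
  subst hx
  induction x using DirectSum.induction_on with
  | zero => simpa using Submodule.zero_mem _
  | of i y =>
      rw [DirectSum.coeAddMonoidHom_of]
      exact Submodule.subset_span ⟨trivial, i, y.2⟩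
  | add a b ha hb =>
      rw [map_add]
      exact Submodule.add_mem _ ha hb

lemma isGraded_bot' (ℳ : G → AddSubgroup M) :
    IsGradedSubmodule ℳ (⊥ : Submodule R M) := by
  intro n hn
  rw [Submodule.mem_bot] at hn
  subst hn
  exact Submodule.zero_mem _

end AuxGeneral

section AuxProd

variable {G : Type*} [Group G] [DecidableEq G]
variable {R₁ R₂ : Type*} [CommRing R₁] [CommRing R₂]
  {M₁ M₂ : Type*} [AddCommGroup M₁] [Module R₁ M₁] [AddCommGroup M₂] [Module R₂ M₂]

@[simp] lemma prodPair_smul_def (r : R₁ × R₂) (m : M₁ × M₂) :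
    r • m = (r.1 • m.1, r.2 • m.2) := rfl

@[simp] lemma mem_prodPairSubmodule {C₁ : Submodule R₁ M₁} {C₂ : Submodule R₂ M₂}
    {x : M₁ × M₂} : x ∈ prodPairSubmodule C₁ C₂ ↔ x.1 ∈ C₁ ∧ x.2 ∈ C₂ := Iff.rfl

/-- First component of a submodule of `M₁ × M₂`. -/
def fstSub (N : Submodule (R₁ × R₂) (M₁ × M₂)) : Submodule R₁ M₁ where
  carrier := {m | ((m, 0) : M₁ × M₂) ∈ N}
  add_mem' := by
    intro a b ha hb
    have := N.add_mem ha hb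
    simpa using this
  zero_mem' := N.zero_mem
  smul_mem' := by
    intro r m hm
    have := N.smul_mem ((r, (0 : R₂)) : R₁ × R₂) hm
    simpa using this

@[simp] lemma mem_fstSub {N : Submodule (R₁ × R₂) (M₁ × M₂)} {m : M₁} :
    m ∈ fstSub N ↔ ((m, 0) : M₁ × M₂) ∈ N := Iff.rfl

lemma fst_zero_mem {N : Submodule (R₁ × R₂) (M₁ × M₂)} {x : M₁ × M₂} (hx : x ∈ N) :
    ((x.1, 0) : M₁ × M₂) ∈ N := by
  have := N.smul_mem (((1 : R₁), (0 : R₂)) : R₁ × R₂) hx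
  simpa using this

lemma snd_zero_mem {N : Submodule (R₁ × R₂) (M₁ × M₂)} {x : M₁ × M₂} (hx : x ∈ N) :
    (((0 : M₁), x.2) : M₁ × M₂) ∈ N := by
  have := N.smul_mem (((0 : R₁), (1 : R₂)) : R₁ × R₂) hx
  simpa using this

@[simp] lemma fstSub_prodPair (A : Submodule R₁ M₁) (B : Submodule R₂ M₂) :
    fstSub (prodPairSubmodule A B) = A := by
  ext m
  simp [B.zero_mem]

lemma fstSub_inf (A B : Submodule (R₁ × R₂) (M₁ × M₂)) :
    fstSub (A ⊓ B) = fstSub A ⊓ fstSub B := rfl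

lemma prodPair_bot_le {X : Submodule R₁ M₁} {U : Submodule (R₁ × R₂) (M₁ × M₂)} :
    prodPairSubmodule X (⊥ : Submodule R₂ M₂) ≤ U ↔ X ≤ fstSub U := by
  constructor
  · intro h m hm
    exact h ⟨hm, Submodule.zero_mem _⟩
  · rintro h ⟨a, b⟩ ⟨ha, hb⟩
    rw [SetLike.mem_coe, Submodule.mem_bot] at hb
    subst hb
    exact h ha

lemma smul_prodPair (r : R₁ × R₂) (A : Submodule R₁ M₁) (B : Submodule R₂ M₂) :
    r • prodPairSubmodule A B = prodPairSubmodule (r.1 • A) (r.2 • B) := by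
  ext x
  rw [mem_pointwise_smul_iff']
  constructor
  · rintro ⟨y, hy, rfl⟩
    exact ⟨mem_pointwise_smul_iff'.2 ⟨y.1, hy.1, rfl⟩,
      mem_pointwise_smul_iff'.2 ⟨y.2, hy.2, rfl⟩⟩
  · rintro ⟨h1, h2⟩
    obtain ⟨y1, hy1, e1⟩ := mem_pointwise_smul_iff'.1 h1
    obtain ⟨y2, hy2, e2⟩ := mem_pointwise_smul_iff'.1 h2
    exact ⟨(y1, y2), ⟨hy1, hy2⟩, Prod.ext e1 e2⟩

lemma isGraded_prodPair {ℳ₁ : G → AddSubgroup M₁} {ℳ₂ : G → AddSubgroup M₂}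
    {C₁ : Submodule R₁ M₁} {C₂ : Submodule R₂ M₂}
    (h₁ : IsGradedSubmodule ℳ₁ C₁) (h₂ : IsGradedSubmodule ℳ₂ C₂) :
    IsGradedSubmodule (fun α => (ℳ₁ α).prod (ℳ₂ α)) (prodPairSubmodule C₁ C₂) := by
  intro n hn
  set S := Submodule.span (R₁ × R₂)
    {m : M₁ × M₂ | m ∈ prodPairSubmodule C₁ C₂ ∧ ∃ α, m ∈ (ℳ₁ α).prod (ℳ₂ α)} with hS
  have key1 : ∀ a, a ∈ Submodule.span R₁ {m : M₁ | m ∈ C₁ ∧ ∃ α, m ∈ ℳ₁ α} →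
      ((a, (0 : M₂)) : M₁ × M₂) ∈ S := by
    intro a ha
    induction ha using Submodule.span_induction with
    | mem x hx =>
        exact Submodule.subset_span ⟨⟨hx.1, C₂.zero_mem⟩,
          hx.2.elim fun α hα => ⟨α, hα, (ℳ₂ α).zero_mem⟩⟩
    | zero => exact S.zero_mem
    | add x y _ _ hx hy => simpa using S.add_mem hx hy
    | smul r x _ hx => simpa using S.smul_mem ((r, (0 : R₂)) : R₁ × R₂) hx
  have key2 : ∀ a, a ∈ Submodule.span R₂ {m : M₂ | m ∈ C₂ ∧ ∃ α, m ∈ ℳ₂ α} →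
      (((0 : M₁), a) : M₁ × M₂) ∈ S := by
    intro a ha
    induction ha using Submodule.span_induction with
    | mem x hx =>
        exact Submodule.subset_span ⟨⟨C₁.zero_mem, hx.1⟩,
          hx.2.elim fun α hα => ⟨α, (ℳ₁ α).zero_mem, hα⟩⟩
    | zero => exact S.zero_mem
    | add x y _ _ hx hy => simpa using S.add_mem hx hy
    | smul r x _ hx => simpa using S.smul_mem (((0 : R₁), r) : R₁ × R₂) hx
  have hrw : n = ((n.1, (0 : M₂)) : M₁ × M₂) + (((0 : M₁), n.2) : M₁ × M₂) := by simp
  rw [hrw]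
  exact S.add_mem (key1 _ (h₁ n.1 hn.1)) (key2 _ (h₂ n.2 hn.2))

lemma isGraded_fstSub {ℳ₁ : G → AddSubgroup M₁} {ℳ₂ : G → AddSubgroup M₂}
    {N : Submodule (R₁ × R₂) (M₁ × M₂)}
    (h : IsGradedSubmodule (fun α => (ℳ₁ α).prod (ℳ₂ α)) N) :
    IsGradedSubmodule ℳ₁ (fstSub N) := by
  intro a ha
  have hle : Submodule.span (R₁ × R₂)
      {m : M₁ × M₂ | m ∈ N ∧ ∃ α, m ∈ (ℳ₁ α).prod (ℳ₂ α)} ≤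
      prodPairSubmodule (Submodule.span R₁ {m : M₁ | m ∈ fstSub N ∧ ∃ α, m ∈ ℳ₁ α})
        (⊤ : Submodule R₂ M₂) := by
    apply Submodule.span_le.2
    rintro ⟨x₁, x₂⟩ ⟨hxN, α, hx1, hx2⟩
    exact ⟨Submodule.subset_span ⟨fst_zero_mem hxN, α, hx1⟩, trivial⟩
  exact (hle (h (a, 0) ha)).1

/-- Second component of a submodule of `M₁ × M₂`. -/
def sndSub (N : Submodule (R₁ × R₂) (M₁ × M₂)) : Submodule R₂ M₂ where
  carrier := {m : M₂ | ((0, m) : M₁ × M₂) ∈ N}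
  add_mem' := by intro a b ha hb; have := N.add_mem ha hb; simpa using this
  zero_mem' := N.zero_mem
  smul_mem' := by
    intro r m hm
    have := N.smul_mem (((0 : R₁), r) : R₁ × R₂) hm
    simpa using this

lemma isGraded_sndSub' {ℳ₁ : G → AddSubgroup M₁} {ℳ₂ : G → AddSubgroup M₂}
    {N : Submodule (R₁ × R₂) (M₁ × M₂)}
    (h : IsGradedSubmodule (fun α => (ℳ₁ α).prod (ℳ₂ α)) N) :
    IsGradedSubmodule ℳ₂ (sndSub N) := by
  intro a ha
  have hle : Submodule.span (R₁ × R₂)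
      {m : M₁ × M₂ | m ∈ N ∧ ∃ α, m ∈ (ℳ₁ α).prod (ℳ₂ α)} ≤
      prodPairSubmodule (⊤ : Submodule R₁ M₁)
        (Submodule.span R₂ {m : M₂ | m ∈ sndSub N ∧ ∃ α, m ∈ ℳ₂ α}) := by
    apply Submodule.span_le.2
    rintro ⟨x₁, x₂⟩ ⟨hxN, α, hx1, hx2⟩
    exact ⟨trivial, Submodule.subset_span ⟨snd_zero_mem hxN, α, hx2⟩⟩
  exact (hle (h (0, a) ha)).2

lemma prodPair_sInf (S : Set (Submodule R₁ M₁)) :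
    prodPairSubmodule (sInf S) (⊤ : Submodule R₂ M₂) =
      sInf ((fun A => prodPairSubmodule A (⊤ : Submodule R₂ M₂)) '' S) := by
  ext x
  rw [Submodule.mem_sInf]
  constructor
  · rintro ⟨hx, -⟩ p ⟨A, hA, rfl⟩
    exact ⟨Submodule.mem_sInf.1 hx A hA, trivial⟩
  · intro hx
    exact ⟨Submodule.mem_sInf.2 fun A hA => (hx _ ⟨A, hA, rfl⟩).1, trivial⟩

lemma cgi_prodPair_top {ℳ₁ : G → AddSubgroup M₁} {ℳ₂ : G → AddSubgroup M₂}
    (hI₂ : DirectSum.IsInternal ℳ₂) {U : Submodule R₁ M₁}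
    (hU : CompletelyGradedIrreducible ℳ₁ U) :
    CompletelyGradedIrreducible (fun α => (ℳ₁ α).prod (ℳ₂ α))
      (prodPairSubmodule U (⊤ : Submodule R₂ M₂)) := by
  obtain ⟨hgr, hne, hirr⟩ := hU
  refine ⟨isGraded_prodPair hgr (isGraded_top' hI₂), ?_, ?_⟩
  · intro h
    apply hne
    ext m
    simp only [Submodule.mem_top, iff_true]
    have : ((m, (0 : M₂)) : M₁ × M₂) ∈ prodPairSubmodule U (⊤ : Submodule R₂ M₂) := by
      rw [h]; trivial
    exact this.1
  · intro S hSgr hEq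
    have hU' : U = sInf (fstSub '' S) := by
      ext m
      constructor
      · intro hm
        refine Submodule.mem_sInf.2 ?_
        rintro _ ⟨D, hD, rfl⟩
        have : ((m, (0 : M₂)) : M₁ × M₂) ∈ sInf S := by
          rw [← hEq]; exact ⟨hm, trivial⟩
        exact Submodule.mem_sInf.1 this D hD
      · intro hm
        have : ((m, (0 : M₂)) : M₁ × M₂) ∈ sInf S :=
          Submodule.mem_sInf.2 fun D hD =>
            Submodule.mem_sInf.1 hm (fstSub D) ⟨D, hD, rfl⟩
        rw [← hEq] at this
        exact this.1
    obtain ⟨D, hD, hDU⟩ := hirr (fstSub '' S)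
      (by rintro _ ⟨D, hD, rfl⟩; exact isGraded_fstSub (hSgr D hD)) hU'
    have heq : prodPairSubmodule U (⊤ : Submodule R₂ M₂) = D := by
      ext ⟨a, b⟩
      constructor
      · rintro ⟨ha, -⟩
        have ha' : ((a, (0 : M₂)) : M₁ × M₂) ∈ D := by
          rw [← hDU] at ha; exact ha
        have hb' : (((0 : M₁), b) : M₁ × M₂) ∈ D := by
          have : (((0 : M₁), b) : M₁ × M₂) ∈ prodPairSubmodule U (⊤ : Submodule R₂ M₂) :=
            ⟨U.zero_mem, trivial⟩
          rw [hEq] at this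
          exact Submodule.mem_sInf.1 this D hD
        have := D.add_mem ha' hb'
        simpa using this
      · intro hd
        refine ⟨?_, trivial⟩
        rw [← hDU]
        exact fst_zero_mem hd
    rw [heq]
    exact hD

lemma cgi_fst {ℳ₁ : G → AddSubgroup M₁} {ℳ₂ : G → AddSubgroup M₂}
    (hI₁ : DirectSum.IsInternal ℳ₁) (hI₂ : DirectSum.IsInternal ℳ₂)
    {U : Submodule (R₁ × R₂) (M₁ × M₂)}
    (hU : CompletelyGradedIrreducible (fun α => (ℳ₁ α).prod (ℳ₂ α)) U) :
    CompletelyGradedIrreducible ℳ₁ (fstSub U) ∨ fstSub U = ⊤ := by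
  obtain ⟨hgr, hne, hirr⟩ := hU
  have hA := isGraded_fstSub (ℳ₂ := ℳ₂) hgr
  have hB := isGraded_sndSub' (ℳ₁ := ℳ₁) hgr
  have hsplit : U = sInf {prodPairSubmodule (fstSub U) (⊤ : Submodule R₂ M₂),
      prodPairSubmodule (⊤ : Submodule R₁ M₁) (sndSub U)} := by
    rw [sInf_pair]
    ext x
    rw [Submodule.mem_inf]
    constructor
    · intro hx
      exact ⟨⟨fst_zero_mem hx, trivial⟩, ⟨trivial, snd_zero_mem hx⟩⟩
    · rintro ⟨⟨h1, -⟩, ⟨-, h2⟩⟩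
      have hrw : x = ((x.1, (0 : M₂)) : M₁ × M₂) + (((0 : M₁), x.2) : M₁ × M₂) := by simp
      rw [hrw]
      exact U.add_mem h1 h2
  have hmem := hirr _ (by
      rintro D hD
      simp only [Set.mem_insert_iff, Set.mem_singleton_iff] at hD
      rcases hD with h | h
      · rw [h]; exact isGraded_prodPair hA (isGraded_top' hI₂)
      · rw [h]; exact isGraded_prodPair (isGraded_top' hI₁) hB) hsplit
  simp only [Set.mem_insert_iff, Set.mem_singleton_iff] at hmem
  rcases hmem with h | h
  · left
    refine ⟨hA, ?_, ?_⟩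
    · intro htop
      apply hne
      rw [htop] at h
      rw [h]
      ext x
      simp only [Submodule.mem_top, iff_true]
      exact ⟨trivial, trivial⟩
    · intro S hSgr hEq
      have hUeq : U = sInf ((fun A => prodPairSubmodule A (⊤ : Submodule R₂ M₂)) '' S) := by
        rw [hEq, prodPair_sInf] at h
        exact h
      obtain ⟨A, hAS, hAU⟩ := hirr _
        (by rintro _ ⟨A, hAS, rfl⟩
            exact isGraded_prodPair (hSgr A hAS) (isGraded_top' hI₂)) hUeq
      have : fstSub U = A := by rw [← hAU, fstSub_prodPair]
      rw [this]
      exact hAS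
  · right
    ext m
    simp only [Submodule.mem_top, iff_true, mem_fstSub]
    rw [h]
    exact ⟨trivial, (sndSub U).zero_mem⟩

end AuxProd

section AuxMain

variable {G : Type*} [Group G] [DecidableEq G]
variable {R : Type*} [CommRing R] {M : Type*} [AddCommGroup M] [Module R M]

lemma str_aux {𝒜 : G → AddSubgroup R} {ℳ : G → AddSubgroup M} {C : Submodule R M}
    (hC : IsGrStronglyClassical2AbsorbingSecond 𝒜 ℳ C) (r s t : R)
    (hr : ∃ α, r ∈ 𝒜 α) (hs : ∃ β, s ∈ 𝒜 β) (ht : ∃ γ, t ∈ 𝒜 γ)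
    {F₁ F₂ F₃ : Submodule R M}
    (h₁ : CompletelyGradedIrreducible ℳ F₁ ∨ F₁ = ⊤)
    (h₂ : CompletelyGradedIrreducible ℳ F₂ ∨ F₂ = ⊤)
    (h₃ : CompletelyGradedIrreducible ℳ F₃ ∨ F₃ = ⊤)
    (hle : r • s • t • C ≤ F₁ ⊓ F₂ ⊓ F₃) :
    r • s • C ≤ F₁ ⊓ F₂ ⊓ F₃ ∨ s • t • C ≤ F₁ ⊓ F₂ ⊓ F₃ ∨ r • t • C ≤ F₁ ⊓ F₂ ⊓ F₃ := by
  rcases h₁ with c₁ | e₁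
  · rcases h₂ with c₂ | e₂
    · rcases h₃ with c₃ | e₃
      · exact hC.2.2 r s t hr hs ht F₁ F₂ F₃ c₁ c₂ c₃ hle
      · subst e₃
        have key : F₁ ⊓ F₂ ⊓ (⊤ : Submodule R M) = F₁ ⊓ F₂ ⊓ F₂ := by simp [inf_assoc]
        rw [key] at hle ⊢
        exact hC.2.2 r s t hr hs ht F₁ F₂ F₂ c₁ c₂ c₂ hle
    · subst e₂
      rcases h₃ with c₃ | e₃
      · have key : F₁ ⊓ (⊤ : Submodule R M) ⊓ F₃ = F₁ ⊓ F₃ ⊓ F₃ := by simp [inf_assoc]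
        rw [key] at hle ⊢
        exact hC.2.2 r s t hr hs ht F₁ F₃ F₃ c₁ c₃ c₃ hle
      · subst e₃
        have key : F₁ ⊓ (⊤ : Submodule R M) ⊓ ⊤ = F₁ ⊓ F₁ ⊓ F₁ := by simp
        rw [key] at hle ⊢
        exact hC.2.2 r s t hr hs ht F₁ F₁ F₁ c₁ c₁ c₁ hle
  · subst e₁
    rcases h₂ with c₂ | e₂
    · rcases h₃ with c₃ | e₃
      · have key : (⊤ : Submodule R M) ⊓ F₂ ⊓ F₃ = F₂ ⊓ F₃ ⊓ F₃ := by simp [inf_assoc]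
        rw [key] at hle ⊢
        exact hC.2.2 r s t hr hs ht F₂ F₃ F₃ c₂ c₃ c₃ hle
      · subst e₃
        have key : (⊤ : Submodule R M) ⊓ F₂ ⊓ ⊤ = F₂ ⊓ F₂ ⊓ F₂ := by simp
        rw [key] at hle ⊢
        exact hC.2.2 r s t hr hs ht F₂ F₂ F₂ c₂ c₂ c₂ hle
    · subst e₂
      rcases h₃ with c₃ | e₃
      · have key : (⊤ : Submodule R M) ⊓ ⊤ ⊓ F₃ = F₃ ⊓ F₃ ⊓ F₃ := by simp
        rw [key] at hle ⊢
        exact hC.2.2 r s t hr hs ht F₃ F₃ F₃ c₃ c₃ c₃ hle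
      · subst e₃
        left
        simp

end AuxMain

theorem stmt17 {G : Type*} [Group G] [DecidableEq G]
    {R₁ R₂ : Type*} [CommRing R₁] [CommRing R₂]
    {M₁ M₂ : Type*} [AddCommGroup M₁] [Module R₁ M₁] [AddCommGroup M₂] [Module R₂ M₂]
    (𝒜₁ : G → AddSubgroup R₁) (𝒜₂ : G → AddSubgroup R₂)
    (ℳ₁ : G → AddSubgroup M₁) (ℳ₂ : G → AddSubgroup M₂)
    (h𝒜₁ : IsRingGrading 𝒜₁) (h𝒜₂ : IsRingGrading 𝒜₂)
    (hℳ₁ : IsModuleGrading 𝒜₁ ℳ₁) (hℳ₂ : IsModuleGrading 𝒜₂ ℳ₂)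
    (C₁ : Submodule R₁ M₁) (hC₁0 : C₁ ≠ ⊥) (hC₁gr : IsGradedSubmodule ℳ₁ C₁) :
    IsGrStronglyClassical2AbsorbingSecond (fun α => (𝒜₁ α).prod (𝒜₂ α))
        (fun α => (ℳ₁ α).prod (ℳ₂ α)) (prodPairSubmodule C₁ (⊥ : Submodule R₂ M₂)) ↔
      IsGrStronglyClassical2AbsorbingSecond 𝒜₁ ℳ₁ C₁ := by
  constructor
  · -- from product to C₁
    rintro ⟨-, -, hmain⟩
    refine ⟨hC₁0, hC₁gr, ?_⟩
    rintro r s t ⟨α, hrα⟩ ⟨β, hsβ⟩ ⟨γ, htγ⟩ U₁ U₂ U₃ hU₁ hU₂ hU₃ hle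
    have key := hmain ((r, 0) : R₁ × R₂) ((s, 0) : R₁ × R₂) ((t, 0) : R₁ × R₂)
      ⟨α, hrα, (𝒜₂ α).zero_mem⟩ ⟨β, hsβ, (𝒜₂ β).zero_mem⟩ ⟨γ, htγ, (𝒜₂ γ).zero_mem⟩
      (prodPairSubmodule U₁ (⊤ : Submodule R₂ M₂))
      (prodPairSubmodule U₂ (⊤ : Submodule R₂ M₂))
      (prodPairSubmodule U₃ (⊤ : Submodule R₂ M₂))
      (cgi_prodPair_top hℳ₂.isInternal hU₁)
      (cgi_prodPair_top hℳ₂.isInternal hU₂)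
      (cgi_prodPair_top hℳ₂.isInternal hU₃)
      (by
        simp only [smul_prodPair, Submodule.smul_bot']
        rw [prodPair_bot_le, fstSub_inf, fstSub_inf, fstSub_prodPair, fstSub_prodPair,
          fstSub_prodPair]
        simpa using hle)
    rcases key with k | k | k
    · left
      simp only [smul_prodPair, Submodule.smul_bot'] at k
      rw [prodPair_bot_le, fstSub_inf, fstSub_inf, fstSub_prodPair, fstSub_prodPair,
        fstSub_prodPair] at k
      simpa using k
    · right; left
      simp only [smul_prodPair, Submodule.smul_bot'] at k
      rw [prodPair_bot_le, fstSub_inf, fstSub_inf, fstSub_prodPair, fstSub_prodPair,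
        fstSub_prodPair] at k
      simpa using k
    · right; right
      simp only [smul_prodPair, Submodule.smul_bot'] at k
      rw [prodPair_bot_le, fstSub_inf, fstSub_inf, fstSub_prodPair, fstSub_prodPair,
        fstSub_prodPair] at k
      simpa using k
  · -- from C₁ to product
    intro h1
    refine ⟨?_, isGraded_prodPair hC₁gr (isGraded_bot' ℳ₂), ?_⟩
    · rw [Submodule.ne_bot_iff] at hC₁0 ⊢
      obtain ⟨m, hm, hm0⟩ := hC₁0
      exact ⟨((m, 0) : M₁ × M₂), ⟨hm, Submodule.zero_mem _⟩, by simp [Prod.ext_iff, hm0]⟩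
    · rintro r s t ⟨α, hrα⟩ ⟨β, hsβ⟩ ⟨γ, htγ⟩ U₁ U₂ U₃ hU₁ hU₂ hU₃ hle
      have hle' : r.1 • s.1 • t.1 • C₁ ≤ fstSub U₁ ⊓ fstSub U₂ ⊓ fstSub U₃ := by
        rw [← fstSub_inf, ← fstSub_inf, ← prodPair_bot_le]
        have e : r • s • t • prodPairSubmodule C₁ (⊥ : Submodule R₂ M₂)
            = prodPairSubmodule (r.1 • s.1 • t.1 • C₁) (⊥ : Submodule R₂ M₂) := by
          simp only [smul_prodPair, Submodule.smul_bot']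
        rw [← e]
        exact hle
      have d₁ := cgi_fst hℳ₁.isInternal hℳ₂.isInternal hU₁
      have d₂ := cgi_fst hℳ₁.isInternal hℳ₂.isInternal hU₂
      have d₃ := cgi_fst hℳ₁.isInternal hℳ₂.isInternal hU₃
      have key := str_aux h1 r.1 s.1 t.1 ⟨α, hrα.1⟩ ⟨β, hsβ.1⟩ ⟨γ, htγ.1⟩ d₁ d₂ d₃ hle'
      rcases key with k | k | k
      · left
        have e : r • s • prodPairSubmodule C₁ (⊥ : Submodule R₂ M₂)
            = prodPairSubmodule (r.1 • s.1 • C₁) (⊥ : Submodule R₂ M₂) := by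
          simp only [smul_prodPair, Submodule.smul_bot']
        rw [e, prodPair_bot_le, fstSub_inf, fstSub_inf]
        exact k
      · right; left
        have e : s • t • prodPairSubmodule C₁ (⊥ : Submodule R₂ M₂)
            = prodPairSubmodule (s.1 • t.1 • C₁) (⊥ : Submodule R₂ M₂) := by
          simp only [smul_prodPair, Submodule.smul_bot']
        rw [e, prodPair_bot_le, fstSub_inf, fstSub_inf]
        exact k
      · right; right
        have e : r • t • prodPairSubmodule C₁ (⊥ : Submodule R₂ M₂)
            = prodPairSubmodule (r.1 • t.1 • C₁) (⊥ : Submodule R₂ M₂) := by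
          simp only [smul_prodPair, Submodule.smul_bot']
        rw [e, prodPair_bot_le, fstSub_inf, fstSub_inf]
        exact k
end
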